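/- If G_1 and G_2 are graphs with R(K_3, G_1) - |V(G_1)| ≥ R(K_3, G_2), then R(K_3, G_1 ∪ G_2) = R(K_3, G_1), where G_1 ∪ G_2 is the disjoint union. -/

import Mathlib

open SimpleGraph

/-- `H` is contained in `G` as a (not necessarily induced) subgraph. -/
def Contains {α β : Type*} (H : SimpleGraph α) (G : SimpleGraph β) : Prop :=
  ∃ f : α → β, Function.Injective f ∧ ∀ ⦃a b⦄, H.Adj a b → G.Adj (f a) (f b)

/-- Every graph on `r` vertices contains a triangle or contains `H` in its complement. -/
def RamseyProp {β : Type*} (H : SimpleGraph β) (r : ℕ) : Prop :=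
  ∀ F : SimpleGraph (Fin r), ¬ F.CliqueFree 3 ∨ Contains H Fᶜ

/-- `R` is the triangle Ramsey number `R(K_3, H)`. -/
def TriRamsey {β : Type*} (H : SimpleGraph β) (R : ℕ) : Prop :=
  IsLeast {r : ℕ | RamseyProp H r} R

/-- Pulling back along an injective adjacency-reflecting map preserves clique-freeness. -/
lemma cliqueFree_of_inj {γ δ : Type*} {F : SimpleGraph δ} {F' : SimpleGraph γ}
    (e : γ → δ) (he : Function.Injective e)
    (hadj : ∀ a b, F'.Adj a b ↔ F.Adj (e a) (e b)) (h : F.CliqueFree 3) :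
    F'.CliqueFree 3 := by
  have : F' = F.comap e := by
    ext a b; simpa using hadj a b
  subst this
  exact SimpleGraph.CliqueFree.comap ⟨SimpleGraph.Embedding.toCopy (⟨⟨e, he⟩, fun {a b} => Iff.rfl⟩ : F.comap e ↪g F)⟩ h

lemma ramsey_mono {β : Type*} {H : SimpleGraph β} {r s : ℕ} (h : RamseyProp H r)
    (hrs : r ≤ s) : RamseyProp H s := by
  intro F
  set e : Fin r → Fin s := Fin.castLE hrs with he
  have heinj : Function.Injective e := fun a b hab => Fin.ext (by
    simpa [e, Fin.castLE] using congrArg Fin.val hab)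
  rcases h (F.comap e) with h3 | ⟨f, hf, hadj⟩
  · left
    intro hF
    exact h3 (cliqueFree_of_inj e heinj (fun a b => Iff.rfl) hF)
  · right
    refine ⟨e ∘ f, heinj.comp hf, fun a b hab => ?_⟩
    have := hadj hab
    rw [SimpleGraph.compl_adj] at this ⊢
    exact ⟨fun hc => this.1 (heinj hc), this.2⟩

theorem stmt11 {α β : Type*} [Fintype α] (G₁ : SimpleGraph α) (G₂ : SimpleGraph β)
    (R₁ R₂ : ℕ) (h₁ : TriRamsey G₁ R₁) (h₂ : TriRamsey G₂ R₂)
    (hge : (R₁ : ℤ) - Fintype.card α ≥ R₂) :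
    TriRamsey (G₁.sum G₂) R₁ := by
  constructor
  · -- upper bound: RamseyProp (G₁.sum G₂) R₁
    intro F
    by_cases hF : F.CliqueFree 3
    · right
      rcases h₁.1 F with h3 | ⟨f, hf, hadj₁⟩
      · exact absurd hF h3
      -- complement of the image of f
      classical
      set s : Finset (Fin R₁) := (Finset.univ.image f)ᶜ with hs
      have hcard : R₂ ≤ s.card := by
        have h1 : (Finset.univ.image f).card = Fintype.card α := by
          rw [Finset.card_image_of_injective _ hf, Finset.card_univ]
        have h2 : s.card = R₁ - Fintype.card α := by
          rw [hs, Finset.card_compl, h1, Fintype.card_fin]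
        have hα : Fintype.card α ≤ R₁ := by
          have := Fintype.card_le_of_injective f hf
          simpa using this
        omega
      set n := s.card with hn
      -- equiv Fin n ≃ s
      let e : Fin n ≃ {x // x ∈ s} := s.equivFin.symm
      have hecoe : Function.Injective (fun i : Fin n => (e i : Fin R₁)) :=
        fun a b hab => e.injective (Subtype.ext hab)
      let F₂ : SimpleGraph (Fin n) := F.comap (fun i => (e i : Fin R₁))
      have hF₂ : F₂.CliqueFree 3 :=
        cliqueFree_of_inj _ hecoe (fun a b => Iff.rfl) hF
      rcases ramsey_mono h₂.1 hcard F₂ with h3 | ⟨g, hg, hadj₂⟩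
      · exact absurd hF₂ h3
      refine ⟨Sum.elim f (fun b => (e (g b) : Fin R₁)), ?_, ?_⟩
      · rintro (a | a) (b | b) hab
        · exact congrArg Sum.inl (hf hab)
        · exfalso
          have hmem : (e (g b) : Fin R₁) ∉ Finset.image f Finset.univ :=
            Finset.mem_compl.1 (e (g b)).2
          exact hmem (Finset.mem_image.2 ⟨a, Finset.mem_univ a, hab⟩)
        · exfalso
          have hmem : (e (g a) : Fin R₁) ∉ Finset.image f Finset.univ :=
            Finset.mem_compl.1 (e (g a)).2
          exact hmem (Finset.mem_image.2 ⟨b, Finset.mem_univ b, hab.symm⟩)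
        · exact congrArg Sum.inr (hg (hecoe hab))
      · rintro (a | a) (b | b) hab
        · exact hadj₁ hab
        · simp [SimpleGraph.sum] at hab
        · simp [SimpleGraph.sum] at hab
        · have hab' : G₂.Adj a b := by simpa [SimpleGraph.sum] using hab
          have := hadj₂ hab'
          rw [SimpleGraph.compl_adj] at this ⊢
          exact ⟨fun hc => this.1 (hecoe hc), this.2⟩
    · exact Or.inl hF
  · -- lower bound
    intro r hr
    apply h₁.2
    intro F
    rcases hr F with h3 | ⟨φ, hφ, hadj⟩
    · exact Or.inl h3
    · right
      refine ⟨φ ∘ Sum.inl, hφ.comp Sum.inl_injective, fun a b hab => ?_⟩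
      exact hadj (by simpa [SimpleGraph.sum] using hab)
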